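/- Let K > 1 be an integer and W ≥ 1 an integer. Let c_1, …, c_W and x_1, …, x_W be reals, and define d_w = c_w·K if sin(x_w) = 0 and d_w = c_w·sin(K·x_w)/sin(x_w) otherwise. Let S be a subset of {1, …, W} with |S| = ⌈W/2⌉ such that |d_{w'}| ≤ |d_w| for every w ∈ S and w' ∉ S. Then for any fixed values y_w (w ∉ S) there exist values y_w (w ∈ S) such that ∑_{w=1}^{W} c_w·f(x_w, y_w) ≤ 0. -/

import Mathlib

open Real Finset

/-- `f(x, y) = ∑_{k=0}^{K−1} cos(y − 2kx)`. -/
noncomputable def f (K : ℕ) (x y : ℝ) : ℝ :=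
  ∑ k ∈ Finset.range K, Real.cos (y - 2 * (k : ℝ) * x)

/-- Dirichlet-kernel identity. -/
lemma dirichlet (K : ℕ) (x y : ℝ) :
    Real.sin x * (∑ k ∈ Finset.range K, Real.cos (y - 2 * (k : ℝ) * x)) =
      Real.sin ((K : ℝ) * x) * Real.cos (y - ((K : ℝ) - 1) * x) := by
  have key : ∀ a b : ℝ, Real.sin b * Real.cos a = (Real.sin (a + b) - Real.sin (a - b)) / 2 := by
    intro a b; rw [Real.sin_add, Real.sin_sub]; ring
  set g : ℕ → ℝ := fun k => Real.sin (y + x - 2 * (k : ℝ) * x) / 2 with hg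
  have h1 : Real.sin x * (∑ k ∈ Finset.range K, Real.cos (y - 2 * (k : ℝ) * x)) =
      ∑ k ∈ Finset.range K, (g k - g (k + 1)) := by
    rw [Finset.mul_sum]
    refine Finset.sum_congr rfl fun k _ => ?_
    rw [key (y - 2 * (k : ℝ) * x) x, hg]
    simp only []
    push_cast
    have e1 : y - 2 * (k : ℝ) * x + x = y + x - 2 * (k : ℝ) * x := by ring
    have e2 : y - 2 * (k : ℝ) * x - x = y + x - 2 * ((k : ℝ) + 1) * x := by ring
    rw [e1, e2]
    ring
  rw [h1, Finset.sum_range_sub' g K, key]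
  have e1 : y - ((K : ℝ) - 1) * x + (K : ℝ) * x = y + x - 2 * (0 : ℝ) * x := by ring
  have e2 : y - ((K : ℝ) - 1) * x - (K : ℝ) * x = y + x - 2 * (K : ℝ) * x := by ring
  rw [e1, e2, hg]
  push_cast
  ring

lemma sinzero (K : ℕ) (x y : ℝ) (hx : Real.sin x = 0) :
    f K x y = (K : ℝ) * Real.cos y := by
  obtain ⟨n, hn⟩ := Real.sin_eq_zero_iff.mp hx
  unfold f
  have : ∀ k ∈ Finset.range K, Real.cos (y - 2 * (k : ℝ) * x) = Real.cos y := by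
    intro k _
    have : y - 2 * (k : ℝ) * x = y - ((k * n : ℤ) : ℝ) * (2 * Real.pi) := by
      rw [← hn]; push_cast; ring
    rw [this, Real.cos_sub_int_mul_two_pi]
  rw [Finset.sum_congr rfl this, Finset.sum_const, Finset.card_range, nsmul_eq_mul]

/-- Each weighted term is a shifted cosine with amplitude `d`. -/
lemma phase (K : ℕ) (c x dd : ℝ)
    (hd : dd = if Real.sin x = 0 then c * K else c * Real.sin ((K : ℝ) * x) / Real.sin x) :
    ∃ θ : ℝ, ∀ y, c * f K x y = dd * Real.cos (y - θ) := by
  by_cases hx : Real.sin x = 0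
  · refine ⟨0, fun y => ?_⟩
    rw [sinzero K x y hx, hd, if_pos hx]
    simp [mul_comm, mul_assoc, mul_left_comm]
  · refine ⟨((K : ℝ) - 1) * x, fun y => ?_⟩
    have h := dirichlet K x y
    have hf : f K x y = Real.sin ((K : ℝ) * x) / Real.sin x * Real.cos (y - ((K : ℝ) - 1) * x) := by
      field_simp
      unfold f
      rw [mul_comm x ((K : ℝ) - 1)]
      linarith [h]
    rw [hf, hd, if_neg hx]
    ring

/-- Lemma 4: for `K > 1`, `W ≥ 1`, reals `c_w, x_w`, with
`d_w = c_w·K` if `sin(x_w) = 0` and `d_w = c_w·sin(K x_w)/sin(x_w)` otherwise, and a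
subset `S` of the indices with `|S| = ⌈W/2⌉` containing indices of largest `|d_w|`:
for any fixed values `y_w` outside `S`, the values `y_w` on `S` can be chosen so that
`∑_w c_w·f(x_w, y_w) ≤ 0`. -/
theorem stmt_8 (K W : ℕ) (hK : 1 < K) (hW : 1 ≤ W)
    (c x : Fin W → ℝ)
    (d : Fin W → ℝ)
    (hd : ∀ w, d w = if Real.sin (x w) = 0 then c w * K
                     else c w * Real.sin ((K : ℝ) * x w) / Real.sin (x w))
    (S : Finset (Fin W)) (hScard : S.card = (W + 1) / 2)
    (hS : ∀ w ∈ S, ∀ w' ∉ S, |d w'| ≤ |d w|)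
    (y₀ : Fin W → ℝ) :
    ∃ y : Fin W → ℝ, (∀ w ∉ S, y w = y₀ w) ∧
      ∑ w, c w * f K (x w) (y w) ≤ 0 := by
  classical
  choose θ hθ using fun w => phase K (c w) (x w) (d w) (hd w)
  -- embedding from Sᶜ into S
  have hcard : Fintype.card ↥(Sᶜ) ≤ Fintype.card ↥S := by
    rw [Fintype.card_coe, Fintype.card_coe, Finset.card_compl, Fintype.card_fin, hScard]
    omega
  obtain ⟨e⟩ := Function.Embedding.nonempty_of_card_le hcard
  set img : Finset (Fin W) := (Sᶜ).attach.image (fun w' => (e w' : Fin W)) with himg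
  have himgS : img ⊆ S := by
    intro w hw
    rw [himg, Finset.mem_image] at hw
    obtain ⟨w', _, rfl⟩ := hw
    exact (e w').2
  -- define y
  set y : Fin W → ℝ := fun w =>
    if w ∈ S then
      (if w ∈ img then θ w + (if 0 ≤ d w then Real.pi else 0) else θ w + Real.pi / 2)
    else y₀ w with hy
  refine ⟨y, fun w hw => by simp [hy, hw], ?_⟩
  -- term values
  have hterm_img : ∀ w ∈ img, c w * f K (x w) (y w) = -|d w| := by
    intro w hw
    have hwS : w ∈ S := himgS hw
    rw [hθ, hy]
    simp only [if_pos hwS, if_pos hw]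
    by_cases hdw : 0 ≤ d w
    · rw [if_pos hdw]
      have : θ w + Real.pi - θ w = Real.pi := by ring
      rw [this, Real.cos_pi, abs_of_nonneg hdw]; ring
    · rw [if_neg hdw]
      have : θ w + 0 - θ w = 0 := by ring
      rw [this, Real.cos_zero, abs_of_neg (lt_of_not_ge hdw)]; ring
  have hterm_rest : ∀ w ∈ S \ img, c w * f K (x w) (y w) = 0 := by
    intro w hw
    rw [Finset.mem_sdiff] at hw
    rw [hθ, hy]
    simp only [if_pos hw.1, if_neg hw.2]
    have : θ w + Real.pi / 2 - θ w = Real.pi / 2 := by ring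
    rw [this, Real.cos_pi_div_two, mul_zero]
  -- split the sum
  have hsplit : ∑ w, c w * f K (x w) (y w) =
      (∑ w ∈ img, c w * f K (x w) (y w)) + (∑ w ∈ S \ img, c w * f K (x w) (y w))
        + (∑ w ∈ Sᶜ, c w * f K (x w) (y w)) := by
    rw [← Finset.sum_add_sum_compl S, ← Finset.sum_sdiff himgS]
    ring
  rw [hsplit, Finset.sum_congr rfl hterm_img, Finset.sum_congr rfl hterm_rest,
    Finset.sum_const, smul_zero, add_zero]
  -- reindex img sum over Sᶜ.attach
  have hre : (∑ w ∈ img, -|d w|) = ∑ w' ∈ (Sᶜ).attach, -|d (e w')| := by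
    rw [himg, Finset.sum_image]
    intro a _ b _ hab
    exact e.injective (Subtype.ext hab)
  have hre2 : (∑ w ∈ Sᶜ, c w * f K (x w) (y w)) =
      ∑ w' ∈ (Sᶜ).attach, c w'.1 * f K (x w'.1) (y w'.1) := (Finset.sum_attach _ _).symm
  rw [hre, hre2, ← Finset.sum_add_distrib]
  apply Finset.sum_nonpos
  intro w' _
  have hw'S : (w' : Fin W) ∉ S := by
    have := w'.2; rwa [Finset.mem_compl] at this
  have hterm : c w'.1 * f K (x w'.1) (y w'.1) = d w'.1 * Real.cos (y₀ w'.1 - θ w'.1) := by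
    rw [hθ, hy]; simp only [if_neg hw'S]
  have hb1 : d w'.1 * Real.cos (y₀ w'.1 - θ w'.1) ≤ |d w'.1| := by
    calc d w'.1 * Real.cos (y₀ w'.1 - θ w'.1) ≤ |d w'.1 * Real.cos (y₀ w'.1 - θ w'.1)| := le_abs_self _
    _ = |d w'.1| * |Real.cos (y₀ w'.1 - θ w'.1)| := abs_mul _ _
    _ ≤ |d w'.1| * 1 := by
        exact mul_le_mul_of_nonneg_left (Real.abs_cos_le_one _) (abs_nonneg _)
    _ = |d w'.1| := mul_one _
  have hb2 : |d w'.1| ≤ |d (e w' : Fin W)| := hS _ (e w').2 _ hw'S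
  rw [hterm]
  linarith
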